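/- Let 𝔠 be the two-dimensional space of 3×3 complex matrices spanned by C₁ = E₂₂ + E₃₃ (up to normalization the Schmidt matrix of (|11⟩+|22⟩)/√2) and C₂ = E₂₁ + E₃₂. Then every nonzero element of 𝔠 has rank exactly 2, and there do NOT exist a 2×3 matrix V₁ with orthonormal rows and a 3×2 matrix V₂ with orthonormal columns such that V₁ C V₂ = 0 for all C ∈ 𝔠. -/

import Mathlib

open Matrix

private lemma rows_minor_aux (b : Matrix (Fin 3) (Fin 2) ℂ) (p q : ℂ) (hp : p ≠ 0)
    (e1 : ∀ l, p * b 1 l + q * b 2 l = 0) (e2 : ∀ l, p * b 0 l + q * b 1 l = 0) :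
    ∀ i j : Fin 3, b i 0 * b j 1 = b i 1 * b j 0 := by
  have hp2 : (p:ℂ)^2 ≠ 0 := pow_ne_zero 2 hp
  have m01 : b 0 0 * b 1 1 = b 0 1 * b 1 0 :=
    mul_left_cancel₀ hp2 (by linear_combination (p * b 1 1) * e2 0 - (p * b 1 0) * e2 1)
  have m12 : b 1 0 * b 2 1 = b 1 1 * b 2 0 :=
    mul_left_cancel₀ hp2 (by linear_combination (p * b 2 1) * e1 0 - (p * b 2 0) * e1 1)
  have m02 : b 0 0 * b 2 1 = b 0 1 * b 2 0 :=
    mul_left_cancel₀ hp2 (by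
      linear_combination b 2 1 * (p * e2 0 - q * e1 0) - b 2 0 * (p * e2 1 - q * e1 1))
  have m10 : b 1 0 * b 0 1 = b 1 1 * b 0 0 := by linear_combination -m01
  have m21 : b 2 0 * b 1 1 = b 2 1 * b 1 0 := by linear_combination -m12
  have m20 : b 2 0 * b 0 1 = b 2 1 * b 0 0 := by linear_combination -m02
  intro i j
  fin_cases i <;> fin_cases j <;>
    first
    | exact mul_comm _ _
    | exact m01 | exact m02 | exact m12 | exact m10 | exact m20 | exact m21

private lemma rows_minor_aux' (b : Matrix (Fin 3) (Fin 2) ℂ) (p q : ℂ) (hq : q ≠ 0)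
    (e1 : ∀ l, p * b 1 l + q * b 2 l = 0) (e2 : ∀ l, p * b 0 l + q * b 1 l = 0) :
    ∀ i j : Fin 3, b i 0 * b j 1 = b i 1 * b j 0 := by
  have hq2 : (q:ℂ)^2 ≠ 0 := pow_ne_zero 2 hq
  have m01 : b 0 0 * b 1 1 = b 0 1 * b 1 0 :=
    mul_left_cancel₀ hq2 (by linear_combination (q * b 0 0) * e2 1 - (q * b 0 1) * e2 0)
  have m12 : b 1 0 * b 2 1 = b 1 1 * b 2 0 :=
    mul_left_cancel₀ hq2 (by linear_combination (q * b 1 0) * e1 1 - (q * b 1 1) * e1 0)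
  have m02 : b 0 0 * b 2 1 = b 0 1 * b 2 0 :=
    mul_left_cancel₀ hq2 (by
      linear_combination b 0 0 * (q * e1 1 - p * e2 1) - b 0 1 * (q * e1 0 - p * e2 0))
  have m10 : b 1 0 * b 0 1 = b 1 1 * b 0 0 := by linear_combination -m01
  have m21 : b 2 0 * b 1 1 = b 2 1 * b 1 0 := by linear_combination -m12
  have m20 : b 2 0 * b 0 1 = b 2 1 * b 0 0 := by linear_combination -m02
  intro i j
  fin_cases i <;> fin_cases j <;>
    first
    | exact mul_comm _ _
    | exact m01 | exact m02 | exact m12 | exact m10 | exact m20 | exact m21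

/-- A 3×2 matrix all of whose 2×2 minors vanish cannot have orthonormal columns. -/
private lemma gram_ne_aux (b : Matrix (Fin 3) (Fin 2) ℂ)
    (h : ∀ i j : Fin 3, b i 0 * b j 1 = b i 1 * b j 0) (h1 : bᴴ * b = 1) : False := by
  have hd := congrArg Matrix.det h1
  rw [Matrix.det_one] at hd
  simp [Matrix.det_fin_two, Matrix.mul_apply, Fin.sum_univ_three,
    Matrix.conjTranspose_apply] at hd
  exact one_ne_zero (α := ℂ)
    (by linear_combination -hd +
      (starRingEnd ℂ) (b 0 0) * (starRingEnd ℂ) (b 0 1) * h 0 0 +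
      (starRingEnd ℂ) (b 0 0) * (starRingEnd ℂ) (b 1 1) * h 0 1 +
      (starRingEnd ℂ) (b 0 0) * (starRingEnd ℂ) (b 2 1) * h 0 2 +
      (starRingEnd ℂ) (b 1 0) * (starRingEnd ℂ) (b 0 1) * h 1 0 +
      (starRingEnd ℂ) (b 1 0) * (starRingEnd ℂ) (b 1 1) * h 1 1 +
      (starRingEnd ℂ) (b 1 0) * (starRingEnd ℂ) (b 2 1) * h 1 2 +
      (starRingEnd ℂ) (b 2 0) * (starRingEnd ℂ) (b 0 1) * h 2 0 +
      (starRingEnd ℂ) (b 2 0) * (starRingEnd ℂ) (b 1 1) * h 2 1 +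
      (starRingEnd ℂ) (b 2 0) * (starRingEnd ℂ) (b 2 1) * h 2 2)

private lemma v1_nondeg_aux (V₁ : Matrix (Fin 2) (Fin 3) ℂ) (h1 : V₁ * V₁ᴴ = 1)
    (hp : V₁ 0 1 = 0) (hq : V₁ 0 2 = 0) (hr : V₁ 1 1 = 0) (hs : V₁ 1 2 = 0) : False := by
  have hd := congrArg Matrix.det h1
  rw [Matrix.det_one] at hd
  simp [Matrix.det_fin_two, Matrix.mul_apply, Fin.sum_univ_three,
    Matrix.conjTranspose_apply, hp, hq, hr, hs] at hd
  exact one_ne_zero (α := ℂ) (by linear_combination -hd)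

private lemma rank_aux (a b : ℂ) (hab : ¬(a = 0 ∧ b = 0)) :
    (!![(0:ℂ),0,0; b,a,0; 0,b,a]).rank = 2 := by
  have li : LinearIndependent ℂ ![![b,a,(0:ℂ)], ![0,b,a]] := by
    rw [LinearIndependent.pair_iff]
    intro s t hst
    have h0 := congrFun hst 0
    have h1 := congrFun hst 1
    have h2 := congrFun hst 2
    simp at h0 h1 h2
    rcases h0 with h0 | hb
    · subst h0
      rcases h2 with h2 | ha
      · exact ⟨rfl, h2⟩
      · simp [ha] at h1
        rcases h1 with h1 | h1
        · exact ⟨rfl, h1⟩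
        · exact absurd ⟨ha, h1⟩ hab
    · subst hb
      rcases h2 with h2 | ha
      · subst h2
        simp at h1
        rcases h1 with h1 | h1
        · exact ⟨h1, rfl⟩
        · exact absurd ⟨h1, rfl⟩ hab
      · exact absurd ⟨ha, rfl⟩ hab
  rw [Matrix.rank_eq_finrank_span_row]
  have hr : Submodule.span ℂ (Set.range (!![(0:ℂ),0,0; b,a,0; 0,b,a]))
      = Submodule.span ℂ (Set.range ![![b,a,(0:ℂ)], ![0,b,a]]) := by
    apply le_antisymm
    · rw [Submodule.span_le]
      rintro x ⟨i, rfl⟩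
      fin_cases i
      · show (!![(0:ℂ),0,0; b,a,0; 0,b,a]) 0 ∈ _
        have h : (!![(0:ℂ),0,0; b,a,0; 0,b,a]) 0 = 0 := by funext j; fin_cases j <;> rfl
        rw [h]; exact zero_mem _
      · exact Submodule.subset_span ⟨0, rfl⟩
      · exact Submodule.subset_span ⟨1, rfl⟩
    · rw [Submodule.span_le]
      rintro x ⟨i, rfl⟩
      fin_cases i
      · exact Submodule.subset_span ⟨1, rfl⟩
      · exact Submodule.subset_span ⟨2, rfl⟩
  change Module.finrank ℂ ↥(Submodule.span ℂ (Set.range !![(0:ℂ),0,0; b,a,0; 0,b,a])) = 2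
  rw [hr, finrank_span_eq_card li]
  simp

/-- For the span of C₁ = E₂₂ + E₃₃ and C₂ = E₂₁ + E₃₂ every nonzero element has
rank 2, and no pair of isometries V₁ (2×3, orthonormal rows) and V₂ (3×2,
orthonormal columns) kills the whole span: no 2⊗2 DFS exists. -/
theorem no_code_for_02_decomposable_space :
    (∀ C ∈ Submodule.span ℂ
        ({!![(0:ℂ),0,0; 0,1,0; 0,0,1], !![(0:ℂ),0,0; 1,0,0; 0,1,0]} :
          Set (Matrix (Fin 3) (Fin 3) ℂ)), C ≠ 0 → C.rank = 2) ∧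
    ¬ ∃ (V₁ : Matrix (Fin 2) (Fin 3) ℂ) (V₂ : Matrix (Fin 3) (Fin 2) ℂ),
        V₁ * V₁ᴴ = 1 ∧ V₂ᴴ * V₂ = 1 ∧
        ∀ C ∈ Submodule.span ℂ
          ({!![(0:ℂ),0,0; 0,1,0; 0,0,1], !![(0:ℂ),0,0; 1,0,0; 0,1,0]} :
            Set (Matrix (Fin 3) (Fin 3) ℂ)), V₁ * C * V₂ = 0 := by
  constructor
  · intro C hC hne
    rw [Submodule.mem_span_pair] at hC
    obtain ⟨a, b, rfl⟩ := hC
    have hM : a • !![(0:ℂ),0,0; 0,1,0; 0,0,1] + b • !![(0:ℂ),0,0; 1,0,0; 0,1,0]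
        = !![(0:ℂ),0,0; b,a,0; 0,b,a] := by
      ext i j; fin_cases i <;> fin_cases j <;> simp [vecHead, vecTail]
    rw [hM] at hne ⊢
    refine rank_aux a b ?_
    rintro ⟨rfl, rfl⟩
    apply hne
    ext i j; fin_cases i <;> fin_cases j <;> rfl
  · rintro ⟨V₁, V₂, hV1, hV2, hall⟩
    have hC1 := hall _ (Submodule.subset_span (Set.mem_insert _ _))
    have hC2 := hall _ (Submodule.subset_span (Set.mem_insert_of_mem _ rfl))
    have e1 : ∀ k l, V₁ k 1 * V₂ 1 l + V₁ k 2 * V₂ 2 l = 0 := by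
      intro k l
      have := congrFun (congrFun hC1 k) l
      fin_cases k <;> fin_cases l <;>
        simp [Matrix.mul_apply, Fin.sum_univ_three] at this ⊢ <;>
        linear_combination this
    have e2 : ∀ k l, V₁ k 1 * V₂ 0 l + V₁ k 2 * V₂ 1 l = 0 := by
      intro k l
      have := congrFun (congrFun hC2 k) l
      fin_cases k <;> fin_cases l <;>
        simp [Matrix.mul_apply, Fin.sum_univ_three] at this ⊢ <;>
        linear_combination this
    by_cases hp : V₁ 0 1 = 0
    · by_cases hq : V₁ 0 2 = 0
      · by_cases hr : V₁ 1 1 = 0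
        · by_cases hs : V₁ 1 2 = 0
          · exact v1_nondeg_aux V₁ hV1 hp hq hr hs
          · exact gram_ne_aux V₂
              (rows_minor_aux' V₂ (V₁ 1 1) (V₁ 1 2) hs (fun l => e1 1 l) (fun l => e2 1 l)) hV2
        · exact gram_ne_aux V₂
            (rows_minor_aux V₂ (V₁ 1 1) (V₁ 1 2) hr (fun l => e1 1 l) (fun l => e2 1 l)) hV2
      · exact gram_ne_aux V₂
          (rows_minor_aux' V₂ (V₁ 0 1) (V₁ 0 2) hq (fun l => e1 0 l) (fun l => e2 0 l)) hV2
    · exact gram_ne_aux V₂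
        (rows_minor_aux V₂ (V₁ 0 1) (V₁ 0 2) hp (fun l => e1 0 l) (fun l => e2 0 l)) hV2
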